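/- Let G be a planar graph with minimum degree δ(G) = 5. Then the Roman bondage number satisfies b_R(G) ≤ 14. -/

import Mathlib

open SimpleGraph Finset

variable {V : Type*} [Fintype V] [DecidableEq V]

/-- The number of orbits (cycles together with fixed points) of a permutation of a finite type. -/
noncomputable def permNumOrbits {α : Type*} [Fintype α] [DecidableEq α] (ψ : Equiv.Perm α) : ℕ :=
  Multiset.card ψ.cycleType + (Finset.univ.filter fun a => ψ a = a).card

/-- A combinatorial (2-cell) embedding scheme of a graph on a surface:
a rotation system together with an edge signature (Mohar–Thomassen). -/
structure SimpleGraph.EmbeddingScheme (G : SimpleGraph V) [DecidableRel G.Adj] where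
  rot : Equiv.Perm G.Dart
  rot_fst : ∀ d : G.Dart, (rot d).toProd.1 = d.toProd.1
  rot_cyclic : ∀ d e : G.Dart, d.toProd.1 = e.toProd.1 → ∃ k : ℕ, (rot ^ k) d = e
  sign : G.Dart → ℤˣ
  sign_symm : ∀ d : G.Dart, sign d.symm = sign d

namespace SimpleGraph.EmbeddingScheme

variable {G : SimpleGraph V} [DecidableRel G.Adj] (S : G.EmbeddingScheme)

def swapPerm : Equiv.Perm (G.Dart × ℤˣ) :=
  Function.Involutive.toPerm (fun p => (p.1.symm, p.2 * S.sign p.1)) (by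
    intro p
    simp [SimpleGraph.Dart.symm_symm, S.sign_symm p.1, mul_assoc, Int.units_mul_self])

def rotPerm : Equiv.Perm (G.Dart × ℤˣ) where
  toFun p := ((S.rot ^ (p.2 : ℤ)) p.1, p.2)
  invFun p := ((S.rot ^ (-(p.2 : ℤ))) p.1, p.2)
  left_inv p := by
    simp [← Equiv.Perm.mul_apply, ← zpow_add]
  right_inv p := by
    obtain ⟨d, s⟩ := p
    show ((S.rot ^ (s : ℤ)) ((S.rot ^ (-(s : ℤ))) d), s) = (d, s)
    rw [← Equiv.Perm.mul_apply (S.rot ^ (s : ℤ)), ← zpow_add, add_neg_cancel, zpow_zero,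
      Equiv.Perm.one_apply]

/-- The face-tracing permutation on signed darts. -/
def faceMap : Equiv.Perm (G.Dart × ℤˣ) := S.swapPerm.trans S.rotPerm

/-- Each face is traced by exactly two orbits of the face-tracing permutation. -/
noncomputable def numFaces : ℕ := permNumOrbits S.faceMap / 2

/-- The Euler characteristic of the closed surface determined by the scheme. -/
noncomputable def eulerChar : ℤ :=
  (Fintype.card V : ℤ) - (G.edgeFinset.card : ℤ) + (S.numFaces : ℤ)

/-- The scheme describes an embedding on an orientable surface iff its signature
is switching-equivalent to the all-positive signature. -/
def IsOrientable : Prop := ∃ θ : V → ℤˣ, ∀ d : G.Dart, S.sign d = θ d.toProd.1 * θ d.toProd.2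

end SimpleGraph.EmbeddingScheme

/-- `G` has orientable genus `g`. -/
def SimpleGraph.HasOrientableGenus (G : SimpleGraph V) [DecidableRel G.Adj] (g : ℕ) : Prop :=
  (∃ S : G.EmbeddingScheme, S.IsOrientable ∧ S.eulerChar = 2 - 2 * (g : ℤ)) ∧
  ∀ g' : ℕ, g' < g → ¬ ∃ S : G.EmbeddingScheme, S.IsOrientable ∧ S.eulerChar = 2 - 2 * (g' : ℤ)

/-- `G` has nonorientable genus `k`. -/
def SimpleGraph.HasNonorientableGenus (G : SimpleGraph V) [DecidableRel G.Adj] (k : ℕ) : Prop :=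
  (∃ S : G.EmbeddingScheme, ¬ S.IsOrientable ∧ S.eulerChar = 2 - (k : ℤ)) ∧
  ∀ k' : ℕ, k' < k → ¬ ∃ S : G.EmbeddingScheme, ¬ S.IsOrientable ∧ S.eulerChar = 2 - (k' : ℤ)

/-- `G` is planar: every component embeds in the sphere. -/
def SimpleGraph.IsPlanar (G : SimpleGraph V) [DecidableRel G.Adj] : Prop :=
  ∃ S : G.EmbeddingScheme, S.IsOrientable ∧
    S.eulerChar = 2 * (Nat.card G.ConnectedComponent : ℤ)

/-- `S` is a total dominating set: every vertex has a neighbour in `S`. -/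
def SimpleGraph.IsTotalDominatingSet (G : SimpleGraph V) (S : Finset V) : Prop :=
  ∀ v : V, ∃ u ∈ S, G.Adj u v

noncomputable def SimpleGraph.totalDominationNumber (G : SimpleGraph V) : ℕ :=
  sInf {k : ℕ | ∃ S : Finset V, G.IsTotalDominatingSet S ∧ S.card = k}

/-- The spanning subgraph of `G` keeping only edges meeting `S`. -/
def SimpleGraph.weakSubgraph (G : SimpleGraph V) (S : Finset V) : SimpleGraph V where
  Adj u v := G.Adj u v ∧ (u ∈ S ∨ v ∈ S)
  symm := by
    constructor
    intro u v h
    exact ⟨h.1.symm, h.2.symm⟩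
  loopless := by
    constructor
    intro v h
    exact h.1.ne rfl

/-- `S` is a weakly connected dominating set. -/
def SimpleGraph.IsWeaklyConnectedDominatingSet (G : SimpleGraph V) (S : Finset V) : Prop :=
  S.Nonempty ∧ (G.weakSubgraph S).Connected

noncomputable def SimpleGraph.weaklyConnectedDominationNumber (G : SimpleGraph V) : ℕ :=
  sInf {k : ℕ | ∃ S : Finset V, G.IsWeaklyConnectedDominatingSet S ∧ S.card = k}

/-- `S` is a connected dominating set. -/
def SimpleGraph.IsConnectedDominatingSet (G : SimpleGraph V) (S : Finset V) : Prop :=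
  (∀ v ∉ S, ∃ u ∈ S, G.Adj u v) ∧ (G.induce (S : Set V)).Connected

noncomputable def SimpleGraph.connectedDominationNumber (G : SimpleGraph V) : ℕ :=
  sInf {k : ℕ | ∃ S : Finset V, G.IsConnectedDominatingSet S ∧ S.card = k}

/-- `S` is a restrained dominating set. -/
def SimpleGraph.IsRestrainedDominatingSet (G : SimpleGraph V) (S : Finset V) : Prop :=
  ∀ v ∉ S, (∃ u ∈ S, G.Adj u v) ∧ (∃ w ∉ S, G.Adj w v)

noncomputable def SimpleGraph.restrainedDominationNumber (G : SimpleGraph V) : ℕ :=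
  sInf {k : ℕ | ∃ S : Finset V, G.IsRestrainedDominatingSet S ∧ S.card = k}

/-- The restrained bondage number. -/
noncomputable def SimpleGraph.restrainedBondageNumber (G : SimpleGraph V) : ℕ :=
  sInf {k : ℕ | ∃ F : Finset (Sym2 V), ↑F ⊆ G.edgeSet ∧ F.card = k ∧
    G.restrainedDominationNumber < (G.deleteEdges ↑F).restrainedDominationNumber}

/-- `S` is a total restrained dominating set. -/
def SimpleGraph.IsTotalRestrainedDominatingSet (G : SimpleGraph V) (S : Finset V) : Prop :=
  (∀ v : V, ∃ u ∈ S, G.Adj u v) ∧ ∀ v ∉ S, ∃ w ∉ S, G.Adj w v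

noncomputable def SimpleGraph.totalRestrainedDominationNumber (G : SimpleGraph V) : ℕ :=
  sInf {k : ℕ | ∃ S : Finset V, G.IsTotalRestrainedDominatingSet S ∧ S.card = k}

/-- The total restrained bondage number (`⊤` if no suitable edge set exists). -/
noncomputable def SimpleGraph.totalRestrainedBondageNumber (G : SimpleGraph V) : ℕ∞ :=
  sInf {k : ℕ∞ | ∃ F : Finset (Sym2 V), ↑F ⊆ G.edgeSet ∧ (F.card : ℕ∞) = k ∧
    (∀ v : V, ∃ u : V, (G.deleteEdges ↑F).Adj u v) ∧
    G.totalRestrainedDominationNumber < (G.deleteEdges ↑F).totalRestrainedDominationNumber}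

/-- Roman dominating function. -/
def SimpleGraph.IsRomanDominatingFunction (G : SimpleGraph V) (f : V → ℕ) : Prop :=
  (∀ v : V, f v ≤ 2) ∧ ∀ v : V, f v = 0 → ∃ u : V, G.Adj u v ∧ f u = 2

noncomputable def SimpleGraph.romanDominationNumber (G : SimpleGraph V) : ℕ :=
  sInf {k : ℕ | ∃ f : V → ℕ, G.IsRomanDominatingFunction f ∧ ∑ v : V, f v = k}

noncomputable def SimpleGraph.romanBondageNumber (G : SimpleGraph V) : ℕ :=
  sInf {k : ℕ | ∃ F : Finset (Sym2 V), ↑F ⊆ G.edgeSet ∧ F.card = k ∧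
    G.romanDominationNumber < (G.deleteEdges ↑F).romanDominationNumber}

/-- The minimum edge-degree `ξ(G)`. -/
noncomputable def SimpleGraph.minEdgeDegree (G : SimpleGraph V) [DecidableRel G.Adj] : ℕ :=
  sInf {k : ℕ | ∃ d : G.Dart, G.degree d.toProd.1 + G.degree d.toProd.2 - 2 = k}

/-- A restricted edge-cut: removing it disconnects `G` leaving no isolated vertex. -/
def SimpleGraph.IsRestrictedEdgeCut (G : SimpleGraph V) (F : Finset (Sym2 V)) : Prop :=
  ↑F ⊆ G.edgeSet ∧ ¬ (G.deleteEdges ↑F).Connected ∧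
    ∀ v : V, ∃ u : V, (G.deleteEdges ↑F).Adj u v

/-- The restricted edge-connectivity `λ'(G)`. -/
noncomputable def SimpleGraph.restrictedEdgeConnectivity (G : SimpleGraph V) : ℕ :=
  sInf {k : ℕ | ∃ F : Finset (Sym2 V), G.IsRestrictedEdgeCut F ∧ F.card = k}

/-- `G` is a star: all edges share a common vertex. -/
def SimpleGraph.IsStar (G : SimpleGraph V) : Prop :=
  ∃ c : V, ∀ e ∈ G.edgeSet, c ∈ e

/-- The average degree `2|E|/|V|` of `G`. -/
noncomputable def SimpleGraph.averageDegree (G : SimpleGraph V) [DecidableRel G.Adj] : ℝ :=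
  2 * (G.edgeFinset.card : ℝ) / (Fintype.card V : ℝ)

def h1 (x : ℕ) : ℕ := if x ≤ 3 then 2 * x + 13 else 4 * x + 7
def h2 (x : ℕ) : ℕ := if x = 0 then 8 else 4 * x + 5
def k1 (x : ℕ) : ℕ := if x ≤ 2 then 2 * x + 11 else if x ≤ 5 then 2 * x + 9 else 2 * x + 7
def k2 (x : ℕ) : ℕ := if x = 1 then 8 else 2 * x + 5


section Aux
variable {V : Type*} [Fintype V] [DecidableEq V]

lemma rdn_set_nonempty (G : SimpleGraph V) :
    {k : ℕ | ∃ f : V → ℕ, G.IsRomanDominatingFunction f ∧ ∑ v : V, f v = k}.Nonempty :=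
  ⟨_, fun _ => 1, ⟨fun _ => one_le_two, fun _ h => absurd h one_ne_zero⟩, rfl⟩

lemma roman_bondage_le_path (G : SimpleGraph V) [DecidableRel G.Adj] {x y z : V}
    (hxy : G.Adj x y) (hyz : G.Adj y z) (hxz : x ≠ z) :
    G.romanBondageNumber ≤ G.degree x + G.degree y + G.degree z - 3 := by
  classical
  set F : Finset (Sym2 V) :=
    G.edgeFinset.filter (fun e => (x ∈ e ∨ y ∈ e ∨ z ∈ e) ∧ e ≠ s(y,z)) with hF
  have hsub : ↑F ⊆ G.edgeSet := by
    intro e he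
    simp only [hF, coe_filter, Set.mem_setOf_eq, mem_edgeFinset] at he
    exact he.1
  set H := G.deleteEdges ↑F with hH
  have hmemF : ∀ e : Sym2 V, e ∈ F ↔ e ∈ G.edgeSet ∧ (x ∈ e ∨ y ∈ e ∨ z ∈ e) ∧ e ≠ s(y,z) := by
    intro e; simp [hF, mem_edgeFinset, and_assoc]
  have hadj : ∀ a b, H.Adj a b ↔ G.Adj a b ∧ ¬ s(a,b) ∈ F := by
    intro a b; simp [hH, deleteEdges_adj]
  -- x is isolated in H
  have hxiso : ∀ a, ¬ H.Adj a x := by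
    intro a ha
    rw [hadj] at ha
    refine ha.2 ?_
    rw [hmemF]
    refine ⟨G.mem_edgeSet.mpr ha.1, Or.inl (by simp), ?_⟩
    intro h
    have : x ∈ s(y,z) := h ▸ (by simp)
    simp only [Sym2.mem_iff] at this
    rcases this with h1 | h2
    · exact hxy.ne h1
    · exact hxz h2
  have hyadj : ∀ a, H.Adj a y → a = z := by
    intro a ha
    by_contra haz
    rw [hadj] at ha
    refine ha.2 ?_
    rw [hmemF]
    refine ⟨G.mem_edgeSet.mpr ha.1, Or.inr (Or.inl (by simp)), ?_⟩
    intro h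
    rw [Sym2.eq_iff] at h
    rcases h with ⟨h1, h2⟩ | ⟨h1, h2⟩
    · exact hyz.ne (h1 ▸ h2)
    · exact haz h1
  have hzadj : ∀ a, H.Adj a z → a = y := by
    intro a ha
    by_contra hay
    rw [hadj] at ha
    refine ha.2 ?_
    rw [hmemF]
    refine ⟨G.mem_edgeSet.mpr ha.1, Or.inr (Or.inr (by simp)), ?_⟩
    intro h
    rw [Sym2.eq_iff] at h
    rcases h with ⟨h1, h2⟩ | ⟨h1, h2⟩
    · exact hay h1
    · exact (hyz.ne h2.symm).elim
  have hyzH : H.Adj y z := by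
    rw [hadj]
    refine ⟨hyz, ?_⟩
    rw [hmemF]
    rintro ⟨-, -, h⟩
    exact h rfl
  -- the minimum RDF of H
  have hWmem : H.romanDominationNumber ∈
      {k : ℕ | ∃ f : V → ℕ, H.IsRomanDominatingFunction f ∧ ∑ v : V, f v = k} :=
    Nat.sInf_mem (rdn_set_nonempty H)
  obtain ⟨g, hg, hgsum⟩ := hWmem
  have hgx : 1 ≤ g x := by
    rcases Nat.eq_zero_or_pos (g x) with h0 | h1
    · obtain ⟨u, hu, -⟩ := hg.2 x h0
      exact (hxiso u hu).elim
    · exact h1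
  have hgyz : 2 ≤ g y + g z := by
    rcases Nat.eq_zero_or_pos (g y) with h0 | h1
    · obtain ⟨u, hu, hu2⟩ := hg.2 y h0
      have hu' := hyadj u hu
      rw [hu'] at hu2
      calc 2 = g z := hu2.symm
        _ ≤ g y + g z := Nat.le_add_left _ _
    · rcases Nat.eq_zero_or_pos (g z) with h0' | h1'
      · obtain ⟨u, hu, hu2⟩ := hg.2 z h0'
        have hu' := hzadj u hu
        rw [hu'] at hu2
        calc 2 = g y := hu2.symm
          _ ≤ g y + g z := Nat.le_add_right _ _
      · exact Nat.add_le_add h1 h1'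
  have hxy' : x ≠ y := hxy.ne
  have hyz' : y ≠ z := hyz.ne
  have hsplit : ∀ f : V → ℕ,
      ∑ v, f v = f x + (f y + f z) + ∑ v ∈ univ \ ({x, y, z} : Finset V), f v := by
    intro f
    have h1 : ∑ v ∈ ({x, y, z} : Finset V), f v = f x + (f y + f z) := by
      rw [sum_insert (by simp [hxy', hxz]), sum_insert (by simp [hyz']), sum_singleton]
    rw [← h1, add_comm, sum_sdiff (subset_univ _)]
  set g' : V → ℕ := fun v => if v = y then 2 else if v = x ∨ v = z then 0 else g v with hg'
  have hg'x : g' x = 0 := by simp [hg', hxy']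
  have hg'y : g' y = 2 := by simp [hg']
  have hg'z : g' z = 0 := by simp [hg', hyz'.symm]
  have houter : ∀ v ∈ univ \ ({x, y, z} : Finset V), g' v = g v := by
    intro v hv
    simp only [mem_sdiff, mem_univ, mem_insert, mem_singleton, true_and] at hv
    push_neg at hv
    simp [hg', hv.1, hv.2.1, hv.2.2]
  have hg'RDF : G.IsRomanDominatingFunction g' := by
    constructor
    · intro v
      by_cases h1 : v = y
      · simp [hg', h1]
      · by_cases h2 : v = x ∨ v = z
        · simp [hg', h1, h2]
        · simpa [hg', h1, h2] using hg.1 v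
    · intro v hv0
      by_cases h1 : v = y
      · rw [h1, hg'y] at hv0; exact absurd hv0 (by norm_num)
      · by_cases h2 : v = x
        · exact ⟨y, h2 ▸ hxy.symm, hg'y⟩
        · by_cases h3 : v = z
          · exact ⟨y, h3 ▸ hyz, hg'y⟩
          · have hgv : g v = 0 := by
              have := houter v (by simp [h2, h1, h3])
              rw [← this]; exact hv0
            obtain ⟨u, hu, hu2⟩ := hg.2 v hgv
            have hux : u ≠ x := by rintro rfl; exact hxiso v hu.symm
            have huy : u ≠ y := by rintro rfl; exact h3 (hyadj v hu.symm)
            have huz : u ≠ z := by rintro rfl; exact h1 (hzadj v hu.symm)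
            refine ⟨u, ((hadj u v).mp hu).1, ?_⟩
            rw [houter u (by simp [hux, huy, huz])]
            exact hu2
  have hγG : G.romanDominationNumber ≤ ∑ v, g' v := Nat.sInf_le ⟨g', hg'RDF, rfl⟩
  have hsum' : ∑ v, g' v = 2 + ∑ v ∈ univ \ ({x, y, z} : Finset V), g v := by
    rw [hsplit g', hg'x, hg'y, hg'z, sum_congr rfl houter]
  have hsumg : g x + (g y + g z) + ∑ v ∈ univ \ ({x, y, z} : Finset V), g v
      = H.romanDominationNumber := by rw [← hsplit g, hgsum]
  have hlt : G.romanDominationNumber < H.romanDominationNumber := by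
    rw [← hsumg]
    calc G.romanDominationNumber ≤ 2 + ∑ v ∈ univ \ ({x, y, z} : Finset V), g v :=
          hsum' ▸ hγG
      _ < g x + (g y + g z) + ∑ v ∈ univ \ ({x, y, z} : Finset V), g v := by
          have : 3 ≤ g x + (g y + g z) := by
            calc 3 = 1 + 2 := rfl
              _ ≤ g x + (g y + g z) := Nat.add_le_add hgx hgyz
          exact Nat.add_lt_add_of_lt_of_le (by omega) le_rfl
  have hbond : G.romanBondageNumber ≤ F.card := Nat.sInf_le ⟨F, hsub, rfl, hlt⟩
  -- cardinality bound on F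
  have hBsub : ({s(x,y), s(y,z)} : Finset (Sym2 V)) ⊆ G.incidenceFinset y := by
    intro e he
    simp only [mem_insert, mem_singleton] at he
    rcases he with rfl | rfl
    · rw [mem_incidenceFinset]; exact ⟨G.mem_edgeSet.mpr hxy, by simp⟩
    · rw [mem_incidenceFinset]; exact ⟨G.mem_edgeSet.mpr hyz, by simp⟩
  have hCsub : ({s(y,z)} : Finset (Sym2 V)) ⊆ G.incidenceFinset z := by
    intro e he
    simp only [mem_singleton] at he
    subst he
    rw [mem_incidenceFinset]; exact ⟨G.mem_edgeSet.mpr hyz, by simp⟩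
  have hpairne : s(x,y) ≠ s(y,z) := by
    intro h
    rw [Sym2.eq_iff] at h
    rcases h with ⟨h1, h2⟩ | ⟨h1, h2⟩
    · exact hxy' h1
    · exact hxz h1
  have hpaircard : ({s(x,y), s(y,z)} : Finset (Sym2 V)).card = 2 := by
    rw [card_insert_of_notMem (by simp [hpairne]), card_singleton]
  have hFsub2 : F ⊆ G.incidenceFinset x ∪
      ((G.incidenceFinset y \ {s(x,y), s(y,z)}) ∪ (G.incidenceFinset z \ {s(y,z)})) := by
    intro e he
    rw [hmemF] at he
    obtain ⟨hee, hinc, hne⟩ := he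
    by_cases hx : x ∈ e
    · exact mem_union_left _ (by rw [mem_incidenceFinset]; exact ⟨hee, hx⟩)
    · rcases hinc with h | h | h
      · exact absurd h hx
      · refine mem_union_right _ (mem_union_left _ ?_)
        rw [mem_sdiff, mem_incidenceFinset]
        refine ⟨⟨hee, h⟩, ?_⟩
        simp only [mem_insert, mem_singleton]
        rintro (rfl | rfl)
        · exact hx (by simp)
        · exact hne rfl
      · refine mem_union_right _ (mem_union_right _ ?_)
        rw [mem_sdiff, mem_incidenceFinset]
        exact ⟨⟨hee, h⟩, by simp [hne]⟩
  have hdy : 2 ≤ G.degree y := by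
    rw [← card_incidenceFinset_eq_degree, ← hpaircard]
    exact card_le_card hBsub
  have hdz : 1 ≤ G.degree z := by
    rw [← card_incidenceFinset_eq_degree]
    exact card_le_card hCsub |>.trans_eq' (by simp)
  have hcard : F.card ≤ G.degree x + ((G.degree y - 2) + (G.degree z - 1)) := by
    calc F.card ≤ _ := card_le_card hFsub2
      _ ≤ (G.incidenceFinset x).card +
          ((G.incidenceFinset y \ {s(x,y), s(y,z)}).card
            + (G.incidenceFinset z \ {s(y,z)}).card) :=
        (card_union_le _ _).trans (Nat.add_le_add le_rfl (card_union_le _ _))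
      _ ≤ G.degree x + ((G.degree y - 2) + (G.degree z - 1)) := by
        rw [card_sdiff_of_subset hBsub, card_sdiff_of_subset hCsub, hpaircard, card_singleton,
          card_incidenceFinset_eq_degree, card_incidenceFinset_eq_degree,
          card_incidenceFinset_eq_degree]
  refine hbond.trans (hcard.trans ?_)
  omega


lemma planar_edge_bound (G : SimpleGraph V) [DecidableRel G.Adj] [Nonempty V]
    (hplanar : G.IsPlanar) (hdeg : ∀ v : V, 2 ≤ G.degree v) :
    (G.edgeFinset.card : ℤ) + 6 ≤ 3 * (Fintype.card V : ℤ) := by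
  classical
  obtain ⟨S, -, hchi⟩ := hplanar
  set ψ := S.faceMap with hψ
  have hrotfst : ∀ (u : ℤˣ) (d : G.Dart), ((S.rot ^ (u : ℤ)) d).toProd.1 = d.toProd.1 := by
    intro u d
    rcases Int.units_eq_one_or u with h | h <;> rw [h]
    · simpa using S.rot_fst d
    · push_cast
      rw [zpow_neg_one]
      have := S.rot_fst (S.rot⁻¹ d)
      rw [← Equiv.Perm.mul_apply, mul_inv_cancel, Equiv.Perm.one_apply] at this
      exact this.symm
  have hrotfix : ∀ (u : ℤˣ) (d : G.Dart), (S.rot ^ (u : ℤ)) d = d → S.rot d = d := by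
    intro u d h
    rcases Int.units_eq_one_or u with hu | hu <;> rw [hu] at h
    · simpa using h
    · push_cast at h
      rw [zpow_neg_one] at h
      conv_lhs => rw [← h]
      rw [← Equiv.Perm.mul_apply, mul_inv_cancel, Equiv.Perm.one_apply]
  have happly : ∀ (d : G.Dart) (u : ℤˣ),
      ψ (d, u) = ((S.rot ^ ((u * S.sign d : ℤˣ) : ℤ)) d.symm, u * S.sign d) := by
    intro d u
    rfl
  have hnofix : ∀ p : G.Dart × ℤˣ, ψ p ≠ p := by
    rintro ⟨d, u⟩ h
    rw [happly] at h
    have h1 := congrArg (fun q : G.Dart × ℤˣ => q.1.toProd.1) h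
    simp only at h1
    rw [hrotfst] at h1
    rw [SimpleGraph.Dart.symm_toProd, Prod.fst_swap] at h1
    exact d.snd_ne_fst h1
  have hno2 : ∀ p : G.Dart × ℤˣ, ψ (ψ p) ≠ p := by
    rintro ⟨d, u⟩ h
    set u1 := u * S.sign d with hu1
    set e := (S.rot ^ (u1 : ℤ)) d.symm with he
    have hst1 : ψ (d, u) = (e, u1) := happly d u
    rw [hst1, happly e u1, Prod.mk.injEq] at h
    obtain ⟨h1, h2⟩ := h
    have hefst : e.toProd.1 = d.toProd.2 := by
      rw [he, hrotfst, SimpleGraph.Dart.symm_toProd, Prod.fst_swap]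
    have hesnd : e.toProd.2 = d.toProd.1 := by
      have h3 := hrotfst (u1 * S.sign e) e.symm
      rw [h1] at h3
      rw [SimpleGraph.Dart.symm_toProd, Prod.fst_swap] at h3
      exact h3.symm
    have heds : e = d.symm := by
      apply SimpleGraph.Dart.ext
      rw [SimpleGraph.Dart.symm_toProd]
      exact Prod.ext hefst hesnd
    have he2 : (S.rot ^ (u1 : ℤ)) d.symm = d.symm := by rw [← he, heds]
    have hfix : S.rot d.symm = d.symm := hrotfix u1 d.symm he2
    have hfixpow : ∀ k : ℕ, (S.rot ^ k) d.symm = d.symm := by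
      intro k
      induction k with
      | zero => simp
      | succ n ih => rw [pow_succ, Equiv.Perm.mul_apply, hfix, ih]
    have huniq : ∀ e' : G.Dart, e'.toProd.1 = d.symm.toProd.1 → e' = d.symm := by
      intro e' he'
      obtain ⟨k, hk⟩ := S.rot_cyclic d.symm e' he'.symm
      rw [← hk, hfixpow]
    have hdv := hdeg d.toProd.2
    rw [← SimpleGraph.card_neighborFinset_eq_degree] at hdv
    obtain ⟨w1, hw1, w2, hw2, hne⟩ := Finset.one_lt_card.mp hdv
    rw [SimpleGraph.mem_neighborFinset] at hw1 hw2
    have hd1 : (SimpleGraph.Dart.mk (d.toProd.2, w1) hw1) = d.symm :=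
      huniq _ (by rw [SimpleGraph.Dart.symm_toProd, Prod.fst_swap])
    have hd2 : (SimpleGraph.Dart.mk (d.toProd.2, w2) hw2) = d.symm :=
      huniq _ (by rw [SimpleGraph.Dart.symm_toProd, Prod.fst_swap])
    apply hne
    have := hd1.trans hd2.symm
    exact congrArg (fun q : G.Dart => q.toProd.2) this
  -- orbit counting
  have hsupp : ψ.support = Finset.univ := by
    ext p
    simp [Equiv.Perm.mem_support, hnofix p]
  have hcard4e : Fintype.card (G.Dart × ℤˣ) = 4 * G.edgeFinset.card := by
    rw [Fintype.card_prod, SimpleGraph.dart_card_eq_twice_card_edges, Fintype.card_units_int]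
    ring
  have hsum : ψ.cycleType.sum = 4 * G.edgeFinset.card := by
    rw [Equiv.Perm.sum_cycleType, hsupp, Finset.card_univ, hcard4e]
  have hthree : ∀ n ∈ ψ.cycleType, 3 ≤ n := by
    intro n hn
    have h2 := Equiv.Perm.two_le_of_mem_cycleType hn
    rcases Nat.lt_or_ge n 3 with hlt | hge
    · exfalso
      have hn2 : n = 2 := by omega
      subst hn2
      obtain ⟨c, τ, hψeq, hdisj, hc, hcard⟩ := Equiv.Perm.mem_cycleType_iff.mp hn
      obtain ⟨a, b, hab, hswap⟩ := Equiv.Perm.card_support_eq_two.mp hcard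
      have hτa : τ a = a := by
        rcases hdisj a with h | h
        · rw [hswap, Equiv.swap_apply_left] at h
          exact absurd h.symm hab
        · exact h
      have hτb : τ b = b := by
        rcases hdisj b with h | h
        · rw [hswap, Equiv.swap_apply_right] at h
          exact absurd h hab
        · exact h
      have hψa : ψ a = b := by
        rw [hψeq, Equiv.Perm.mul_apply, hτa, hswap, Equiv.swap_apply_left]
      have hψb : ψ b = a := by
        rw [hψeq, Equiv.Perm.mul_apply, hτb, hswap, Equiv.swap_apply_right]
      exact hno2 a (by rw [hψa, hψb])
    · exact hge
  have h3o : 3 * Multiset.card ψ.cycleType ≤ 4 * G.edgeFinset.card := by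
    have := Multiset.card_nsmul_le_sum hthree
    rw [hsum] at this
    rw [smul_eq_mul] at this
    omega
  have hfixempty : (Finset.univ.filter fun p : G.Dart × ℤˣ => ψ p = p) = ∅ := by
    apply Finset.filter_false_of_mem
    intro p _
    exact hnofix p
  have hnumorb : permNumOrbits ψ = Multiset.card ψ.cycleType := by
    rw [permNumOrbits, hfixempty, Finset.card_empty, add_zero]
  have hfaces : 3 * S.numFaces ≤ 2 * G.edgeFinset.card := by
    have h1 : S.numFaces = Multiset.card ψ.cycleType / 2 := by
      rw [SimpleGraph.EmbeddingScheme.numFaces, ← hψ, hnumorb]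
    omega
  -- Euler formula
  haveI : Finite G.ConnectedComponent := Quot.finite _
  haveI : Nonempty G.ConnectedComponent := ⟨G.connectedComponentMk (Classical.arbitrary V)⟩
  have hc1 : 1 ≤ Nat.card G.ConnectedComponent := Nat.card_pos
  rw [SimpleGraph.EmbeddingScheme.eulerChar] at hchi
  have hcast : (3 : ℤ) * (S.numFaces : ℤ) ≤ 2 * (G.edgeFinset.card : ℤ) := by
    exact_mod_cast hfaces
  have hccast : (1 : ℤ) ≤ (Nat.card G.ConnectedComponent : ℤ) := by exact_mod_cast hc1
  linarith


lemma exists_light_path (G : SimpleGraph V) [DecidableRel G.Adj]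
    (hdeg : ∀ v : V, 5 ≤ G.degree v)
    (hE : (G.edgeFinset.card : ℤ) + 6 ≤ 3 * (Fintype.card V : ℤ)) :
    ∃ x y z : V, G.Adj x y ∧ G.Adj y z ∧ x ≠ z ∧
      G.degree x + G.degree y + G.degree z ≤ 17 := by
  classical
  by_contra hcon
  push_neg at hcon
  -- send and receive functions (discharging)
  set send : V → ℤ := fun v =>
    ((Finset.univ.filter fun u => G.Adj v u ∧ 7 ≤ G.degree v ∧ G.degree u = 5).card : ℤ)
    with hsend
  set recv : V → ℤ := fun v =>
    ((Finset.univ.filter fun u => G.Adj u v ∧ 7 ≤ G.degree u ∧ G.degree v = 5).card : ℤ)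
    with hrecv
  have hsumeq : ∑ v, send v = ∑ v, recv v := by
    rw [hsend, hrecv]
    simp only [Finset.card_filter]
    push_cast
    rw [Finset.sum_comm]
  have key : ∀ v : V, 0 ≤ 4 * (G.degree v : ℤ) - 24 - send v + recv v := by
    intro v
    have hrecv0 : 0 ≤ recv v := by positivity
    have hdv := hdeg v
    rcases Nat.lt_or_ge (G.degree v) 7 with hlt | hge
    · -- degree 5 or 6 : sends nothing
      have hs0 : send v = 0 := by
        simp only [hsend]
        norm_cast
        rw [Finset.card_eq_zero, Finset.filter_eq_empty_iff]
        intro u _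
        rintro ⟨-, h7, -⟩
        omega
      rcases Nat.lt_or_ge (G.degree v) 6 with h5 | h6
      · -- degree exactly 5 : receives at least 4
        have hd5 : G.degree v = 5 := by omega
        have hlow : (G.neighborFinset v |>.filter fun u => G.degree u ≤ 6).card ≤ 1 := by
          rw [Finset.card_le_one]
          intro a ha b hb
          by_contra hab
          rw [Finset.mem_filter, SimpleGraph.mem_neighborFinset] at ha hb
          have := hcon a v b ha.1.symm hb.1 hab
          omega
        have hsplit := Finset.card_filter_add_card_filter_not
          (s := G.neighborFinset v) (p := fun u => G.degree u ≤ 6)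
        have hNcard : (G.neighborFinset v).card = 5 := by
          rw [SimpleGraph.card_neighborFinset_eq_degree, hd5]
        have hhighsub : (G.neighborFinset v |>.filter fun u => ¬ G.degree u ≤ 6) ⊆
            Finset.univ.filter fun u => G.Adj u v ∧ 7 ≤ G.degree u ∧ G.degree v = 5 := by
          intro u hu
          rw [Finset.mem_filter, SimpleGraph.mem_neighborFinset] at hu
          rw [Finset.mem_filter]
          exact ⟨Finset.mem_univ u, hu.1.symm, by omega, hd5⟩
        have hrec4 : (4 : ℤ) ≤ recv v := by
          simp only [hrecv]
          have := Finset.card_le_card hhighsub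
          have h4 : 4 ≤ (Finset.univ.filter fun u =>
              G.Adj u v ∧ 7 ≤ G.degree u ∧ G.degree v = 5).card := by omega
          exact_mod_cast h4
        rw [hs0, hd5]
        push_cast
        linarith
      · -- degree exactly 6
        have hd6 : G.degree v = 6 := by omega
        rw [hs0, hd6]
        push_cast
        linarith
    · -- degree at least 7 : bound what is sent
      have hsub : (Finset.univ.filter fun u => G.Adj v u ∧ 7 ≤ G.degree v ∧ G.degree u = 5)
          ⊆ G.neighborFinset v := by
        intro u hu
        rw [Finset.mem_filter] at hu
        rw [SimpleGraph.mem_neighborFinset]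
        exact hu.2.1
      have hsendle : send v ≤ (G.degree v : ℤ) := by
        simp only [hsend]
        have := Finset.card_le_card hsub
        rw [SimpleGraph.card_neighborFinset_eq_degree] at this
        exact_mod_cast this
      rcases Nat.lt_or_ge (G.degree v) 8 with h7 | h8
      · -- degree exactly 7 : sends at most 1
        have hd7 : G.degree v = 7 := by omega
        have hs1 : send v ≤ 1 := by
          simp only [hsend]
          norm_cast
          rw [Finset.card_le_one]
          intro a ha b hb
          by_contra hab
          rw [Finset.mem_filter] at ha hb
          obtain ⟨-, ha1, -, ha5⟩ := ha
          obtain ⟨-, hb1, -, hb5⟩ := hb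
          have := hcon a v b ha1.symm hb1 hab
          omega
        rw [hd7]
        push_cast
        linarith
      · -- degree at least 8
        have h8' : (8 : ℤ) ≤ (G.degree v : ℤ) := by exact_mod_cast h8
        linarith
  have htotal : 0 ≤ ∑ v, (4 * (G.degree v : ℤ) - 24 - send v + recv v) :=
    Finset.sum_nonneg fun v _ => key v
  have hexpand : ∑ v, (4 * (G.degree v : ℤ) - 24 - send v + recv v)
      = 8 * (G.edgeFinset.card : ℤ) - 24 * (Fintype.card V : ℤ) := by
    rw [Finset.sum_add_distrib, Finset.sum_sub_distrib, hsumeq]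
    have hdegsum : ∑ v, (G.degree v : ℤ) = 2 * (G.edgeFinset.card : ℤ) := by
      rw [← Nat.cast_sum]
      exact_mod_cast congrArg (Nat.cast : ℕ → ℤ) G.sum_degrees_eq_twice_card_edges
    have hA : ∑ v, (4 * (G.degree v : ℤ) - 24)
        = 8 * (G.edgeFinset.card : ℤ) - 24 * (Fintype.card V : ℤ) := by
      rw [Finset.sum_sub_distrib, ← Finset.mul_sum, hdegsum, Finset.sum_const,
        Finset.card_univ, nsmul_eq_mul]
      ring
    rw [hA]
    ring
  rw [hexpand] at htotal
  linarith

end Aux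

/-- the Roman bondage number of a planar graph with `δ(G) = 5` is at most 14. -/
theorem statement_16 {V : Type*} [Fintype V] [DecidableEq V] (G : SimpleGraph V)
    [DecidableRel G.Adj] (hplanar : G.IsPlanar) (hδ : G.minDegree = 5) :
    G.romanBondageNumber ≤ 14 := by
  classical
  rcases isEmpty_or_nonempty V with hV | hV
  · exfalso
    rw [SimpleGraph.minDegree] at hδ
    simp [Finset.univ_eq_empty] at hδ
  · have hdeg : ∀ v : V, 5 ≤ G.degree v := fun v => hδ ▸ G.minDegree_le_degree v
    have hE := planar_edge_bound G hplanar (fun v => le_trans (by norm_num) (hdeg v))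
    obtain ⟨x, y, z, hxy, hyz, hxz, hsum⟩ := exists_light_path G hdeg hE
    have hb := roman_bondage_le_path G hxy hyz hxz
    omega
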